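/- arXiv:2305.02439 — 3 statements merged into one kernel-verified Lean document; each statement's English description precedes it below -/
import Mathlib

section
/- Let (m̃_M)_{M∈ℕ} be random variables with 0 ≤ m̃_M ≤ M almost surely, E[m̃_M] = Θ(M) (i.e. there exist constants 0 < c₁ ≤ c₂ with c₁M ≤ E[m̃_M] ≤ c₂M for large M), and Var(m̃_M) = O(M). Let ε_M = M^{5/6}. Then lim_{M→∞} E[M/(m̃_M + ε_M)] = lim_{M→∞} M/E[m̃_M], provided the latter limit exists. -/
open Filter Topology MeasureTheory ProbabilityTheory

/-- Let `m̃_M` be random variables with `0 ≤ m̃_M ≤ M` a.s., `E[m̃_M] = Θ(M)` and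
`Var(m̃_M) = O(M)`, and let `ε_M = M^{5/6}`.  Then
`lim_{M→∞} E[M/(m̃_M + ε_M)] = lim_{M→∞} M/E[m̃_M]`, provided the latter limit exists. -/
theorem regularized_inverse_moment_limit
    {Ω : Type*} [MeasurableSpace Ω] (μ : Measure Ω) [IsProbabilityMeasure μ]
    (m : ℕ → Ω → ℝ) (hmeas : ∀ M, Measurable (m M))
    (hbound : ∀ M : ℕ, ∀ᵐ ω ∂μ, 0 ≤ m M ω ∧ m M ω ≤ M)
    (c₁ c₂ : ℝ) (hc₁ : 0 < c₁) (hc₁₂ : c₁ ≤ c₂)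
    (M₀ : ℕ) (hmean : ∀ M ≥ M₀,
      c₁ * M ≤ ∫ ω, m M ω ∂μ ∧ ∫ ω, m M ω ∂μ ≤ c₂ * M)
    (C : ℝ) (hvar : ∀ M ≥ M₀, variance (m M) μ ≤ C * M)
    (L : ℝ) (hL : Tendsto (fun M : ℕ => (M : ℝ) / ∫ ω, m M ω ∂μ) atTop (𝓝 L)) :
    Tendsto (fun M : ℕ => ∫ ω, (M : ℝ) / (m M ω + (M : ℝ) ^ ((5:ℝ) / 6)) ∂μ)
      atTop (𝓝 L) := by
  -- error bound function
  set e : ℕ → ℝ := fun M =>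
    (M:ℝ) ^ ((5:ℝ)/6) / (c₁ ^ 2 * M) + |C| / (c₁ ^ 2 * (M:ℝ) ^ ((5:ℝ)/6)) with he_def
  have key : ∀ M : ℕ, M ≥ max M₀ 1 →
      |(∫ ω, (M : ℝ) / (m M ω + (M : ℝ) ^ ((5:ℝ) / 6)) ∂μ)
        - (M : ℝ) / ∫ ω, m M ω ∂μ| ≤ e M := by
    intro M hM
    have hM0 : M₀ ≤ M := le_trans (le_max_left _ _) hM
    have hM1 : 1 ≤ M := le_trans (le_max_right _ _) hM
    have hMpos : (0:ℝ) < M := by exact_mod_cast hM1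
    set X : Ω → ℝ := m M with hX_def
    set b : ℝ := ∫ ω, X ω ∂μ with hb_def
    set ep : ℝ := (M:ℝ) ^ ((5:ℝ)/6) with hep_def
    have hep : 0 < ep := Real.rpow_pos_of_pos hMpos _
    have hb1 : c₁ * M ≤ b := (hmean M hM0).1
    have hbpos : 0 < b := lt_of_lt_of_le (by positivity) hb1
    have hXbd : ∀ᵐ ω ∂μ, ‖X ω‖ ≤ (M:ℝ) := by
      filter_upwards [hbound M] with ω h
      rw [Real.norm_eq_abs, abs_le]
      exact ⟨by linarith [h.1], h.2⟩
    have hXint : Integrable X μ :=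
      (integrable_const ((M:ℝ))).mono' (hmeas M).aestronglyMeasurable hXbd
    have hX2 : MemLp X 2 μ :=
      (memLp_top_of_bound (hmeas M).aestronglyMeasurable (M:ℝ) hXbd).mono_exponent
        le_top
    have hvarX : ∫ ω, (X ω - b) ^ 2 ∂μ ≤ C * M := by
      have h1 : variance X μ = ∫ ω, (X ω - b) ^ 2 ∂μ := by
        rw [variance_eq_integral (hmeas M).aemeasurable]
      rw [← h1]; exact hvar M hM0
    have hsqbd : ∀ᵐ ω ∂μ, ‖(X ω - b) ^ 2‖ ≤ ((M:ℝ) + b) ^ 2 := by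
      filter_upwards [hbound M] with ω h
      have habs : |X ω - b| ≤ (M:ℝ) + b := abs_le.2 ⟨by linarith [h.1], by linarith [h.2]⟩
      rw [Real.norm_eq_abs, abs_pow]
      exact pow_le_pow_left₀ (abs_nonneg _) habs 2
    have hsqmeas : Measurable fun ω => (X ω - b) ^ 2 :=
      ((hmeas M).sub measurable_const).pow_const 2
    have hsqint : Integrable (fun ω => (X ω - b) ^ 2) μ :=
      (integrable_const _).mono' hsqmeas.aestronglyMeasurable hsqbd
    set h1 : Ω → ℝ := fun ω => (X ω - b) ^ 2 / (X ω + ep) with hh1_def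
    have hh1meas : Measurable h1 := hsqmeas.div ((hmeas M).add_const ep)
    have hh1bd : ∀ᵐ ω ∂μ, ‖h1 ω‖ ≤ ((M:ℝ) + b) ^ 2 / ep := by
      filter_upwards [hbound M, hsqbd] with ω h hsq
      have hx : 0 < X ω + ep := by have := h.1; positivity
      rw [Real.norm_eq_abs, abs_div, abs_of_pos hx]
      apply div_le_div₀ (by positivity) _ hep (by linarith [h.1])
      rwa [Real.norm_eq_abs] at hsq
    have hh1int : Integrable h1 μ :=
      (integrable_const _).mono' hh1meas.aestronglyMeasurable hh1bd
    -- pointwise identity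
    have hself : ∀ᵐ ω ∂μ, (M:ℝ) / (X ω + ep)
        = (M:ℝ) / (b + ep) + ((M:ℝ) / (b + ep) ^ 2) * (h1 ω - (X ω - b)) := by
      filter_upwards [hbound M] with ω h
      have hx : X ω + ep ≠ 0 := by have := h.1; positivity
      have hbe : b + ep ≠ 0 := by positivity
      rw [hh1_def]
      field_simp
      ring
    have hXsubint : Integrable (fun ω => X ω - b) μ := hXint.sub (integrable_const b)
    have hXsub0 : ∫ ω, (X ω - b) ∂μ = 0 := by
      rw [integral_sub hXint (integrable_const b), integral_const]
      simp [hb_def]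
    have split : ∫ ω, (M:ℝ) / (X ω + ep) ∂μ
        = (M:ℝ) / (b + ep) + ((M:ℝ) / (b + ep) ^ 2) * ∫ ω, h1 ω ∂μ := by
      have hint2 : Integrable (fun ω => ((M:ℝ) / (b + ep) ^ 2) * (h1 ω - (X ω - b))) μ :=
        (hh1int.sub hXsubint).const_mul _
      rw [integral_congr_ae hself, integral_add (integrable_const _) hint2,
        integral_const, integral_const_mul, integral_sub hh1int hXsubint, hXsub0]
      simp
    have hR0 : 0 ≤ ∫ ω, h1 ω ∂μ := by
      apply integral_nonneg_of_ae
      filter_upwards [hbound M] with ω h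
      have := h.1
      positivity
    have hRle : ∫ ω, h1 ω ∂μ ≤ C * M / ep := by
      calc ∫ ω, h1 ω ∂μ ≤ ∫ ω, (X ω - b) ^ 2 / ep ∂μ := by
            apply integral_mono_ae hh1int (hsqint.div_const ep)
            filter_upwards [hbound M] with ω h
            apply div_le_div_of_nonneg_left (sq_nonneg _) hep (by linarith [h.1])
        _ = (∫ ω, (X ω - b) ^ 2 ∂μ) / ep := integral_div ep _
        _ ≤ C * M / ep := by gcongr
    -- now the bound
    have hbe : 0 < b + ep := by positivity
    rw [split]
    have term1 : |(M:ℝ) / (b + ep) - (M:ℝ) / b| ≤ ep / (c₁ ^ 2 * M) := by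
      have heq : (M:ℝ) / (b + ep) - (M:ℝ) / b = -((M:ℝ) * ep / (b * (b + ep))) := by
        field_simp
        ring
      rw [heq, abs_neg, abs_of_nonneg (by positivity)]
      calc (M:ℝ) * ep / (b * (b + ep)) ≤ (M:ℝ) * ep / ((c₁ * M) * (c₁ * M)) := by
            apply div_le_div_of_nonneg_left (by positivity) (by positivity)
            exact mul_le_mul hb1 (by linarith) (by positivity) (le_of_lt hbpos)
        _ = ep / (c₁ ^ 2 * M) := by
            field_simp
    have term2 : ((M:ℝ) / (b + ep) ^ 2) * ∫ ω, h1 ω ∂μ ≤ |C| / (c₁ ^ 2 * ep) := by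
      calc ((M:ℝ) / (b + ep) ^ 2) * ∫ ω, h1 ω ∂μ
          ≤ ((M:ℝ) / (c₁ * M) ^ 2) * (C * M / ep) := by
            apply mul_le_mul _ hRle hR0 (by positivity)
            apply div_le_div_of_nonneg_left (by positivity) (by positivity)
            exact pow_le_pow_left₀ (by positivity) (by linarith) 2
        _ = C / (c₁ ^ 2 * ep) := by
            field_simp
        _ ≤ |C| / (c₁ ^ 2 * ep) := by gcongr; exact le_abs_self C
    have hterm2pos : 0 ≤ ((M:ℝ) / (b + ep) ^ 2) * ∫ ω, h1 ω ∂μ := by positivity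
    have habs : |((M:ℝ) / (b + ep) + ((M:ℝ) / (b + ep) ^ 2) * ∫ ω, h1 ω ∂μ) - (M:ℝ) / b|
        ≤ |(M:ℝ) / (b + ep) - (M:ℝ) / b| + ((M:ℝ) / (b + ep) ^ 2) * ∫ ω, h1 ω ∂μ := by
      have := abs_add_le ((M:ℝ) / (b + ep) - (M:ℝ) / b)
        (((M:ℝ) / (b + ep) ^ 2) * ∫ ω, h1 ω ∂μ)
      rw [abs_of_nonneg hterm2pos] at this
      calc |((M:ℝ) / (b + ep) + ((M:ℝ) / (b + ep) ^ 2) * ∫ ω, h1 ω ∂μ) - (M:ℝ) / b|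
          = |((M:ℝ) / (b + ep) - (M:ℝ) / b) + ((M:ℝ) / (b + ep) ^ 2) * ∫ ω, h1 ω ∂μ| := by
            rw [add_sub_right_comm]
        _ ≤ _ := this
    refine le_trans habs ?_
    have heval : e M = ep / (c₁ ^ 2 * M) + |C| / (c₁ ^ 2 * ep) := rfl
    rw [heval]
    linarith
  -- the error bound tends to 0
  have he1 : Tendsto (fun M : ℕ => (M:ℝ) ^ ((5:ℝ)/6) / (c₁ ^ 2 * M)) atTop (𝓝 0) := by
    have hlim : Tendsto (fun M : ℕ => (1 / c₁ ^ 2) * (M:ℝ) ^ (-((1:ℝ)/6))) atTop (𝓝 0) := by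
      have h0 : Tendsto (fun x : ℝ => x ^ (-((1:ℝ)/6))) atTop (𝓝 0) :=
        tendsto_rpow_neg_atTop (by norm_num)
      have h1 : Tendsto (fun M : ℕ => (M:ℝ) ^ (-((1:ℝ)/6))) atTop (𝓝 0) :=
        h0.comp (tendsto_natCast_atTop_atTop (R := ℝ))
      have h2 := h1.const_mul (1 / c₁ ^ 2)
      rwa [mul_zero] at h2
    apply hlim.congr'
    filter_upwards [eventually_ge_atTop 1] with M hM1
    have hMpos : (0:ℝ) < M := by exact_mod_cast hM1
    rw [show -((1:ℝ)/6) = (5:ℝ)/6 - 1 by norm_num, Real.rpow_sub hMpos, Real.rpow_one]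
    field_simp
  have he2 : Tendsto (fun M : ℕ => |C| / (c₁ ^ 2 * (M:ℝ) ^ ((5:ℝ)/6))) atTop (𝓝 0) := by
    have hden : Tendsto (fun M : ℕ => c₁ ^ 2 * (M:ℝ) ^ ((5:ℝ)/6)) atTop atTop :=
      ((tendsto_rpow_atTop (by norm_num : (0:ℝ) < 5/6)).comp
        (tendsto_natCast_atTop_atTop (R := ℝ))).const_mul_atTop (by positivity)
    have := hden.inv_tendsto_atTop.const_mul |C|
    simpa [div_eq_mul_inv] using this
  have heTendsto : Tendsto e atTop (𝓝 0) := by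
    have := he1.add he2
    simpa using this
  -- finish by squeezing
  set d : ℕ → ℝ := fun M =>
    (∫ ω, (M : ℝ) / (m M ω + (M : ℝ) ^ ((5:ℝ) / 6)) ∂μ)
      - (M : ℝ) / ∫ ω, m M ω ∂μ with hd_def
  have hd : Tendsto d atTop (𝓝 0) := by
    apply squeeze_zero_norm' _ heTendsto
    filter_upwards [eventually_ge_atTop (max M₀ 1)] with M hM
    exact key M hM
  have := hL.add hd
  rw [add_zero] at this
  apply this.congr
  intro M
  rw [hd_def]
  ring
end

section
/- Let m̃ be binomial with M trials and success probability p ∈ (0,1], and ε_M = M^{5/6}. Then lim_{M→∞} E[M/(m̃ + ε_M)] = 1/p. -/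
open Filter Topology
open scoped ENNReal

open Finset in
private lemma aux_sum0 (x y : ℝ) (n : ℕ) :
    ∑ k ∈ range (n+1), x^k * y^(n-k) * (n.choose k : ℝ) = (x+y)^n :=
  (add_pow x y n).symm

open Finset in
private lemma aux_sum1 (x y : ℝ) (n : ℕ) :
    ∑ k ∈ range (n+1), (k:ℝ) * (x^k * y^(n-k) * (n.choose k : ℝ))
      = n * x * (x+y)^(n-1) := by
  cases n with
  | zero => simp
  | succ m =>
    rw [Finset.sum_range_succ']
    simp only [Nat.cast_zero, zero_mul, add_zero, Nat.add_sub_cancel]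
    have key : ∀ k ∈ range (m+1),
        ((k+1 : ℕ) : ℝ) * (x^(k+1) * y^(m+1-(k+1)) * (((m+1).choose (k+1)) : ℝ))
        = ((m+1 : ℕ) : ℝ) * x * (x^k * y^(m-k) * ((m.choose k) : ℝ)) := by
      intro k hk
      have h := Nat.add_one_mul_choose_eq m k
      have h' : ((m+1 : ℕ) : ℝ) * (m.choose k : ℝ)
          = ((m+1).choose (k+1) : ℝ) * ((k+1 : ℕ) : ℝ) := by
        exact_mod_cast congrArg (Nat.cast (R := ℝ)) h
      have hsub : m + 1 - (k+1) = m - k := by omega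
      rw [hsub]
      push_cast at h' ⊢
      linear_combination (-(x^(k+1) * y^(m-k))) * h'
    rw [Finset.sum_congr rfl key, ← Finset.mul_sum, aux_sum0]

open Finset in
private lemma aux_sum2 (x y : ℝ) (n : ℕ) :
    ∑ k ∈ range (n+1), (k:ℝ) * ((k:ℝ)-1) * (x^k * y^(n-k) * (n.choose k : ℝ))
      = n * ((n:ℝ)-1) * x^2 * (x+y)^(n-2) := by
  match n with
  | 0 => simp
  | 1 => rw [Finset.sum_range_succ, Finset.sum_range_succ]; norm_num
  | (m+2) =>
    rw [Finset.sum_range_succ', Finset.sum_range_succ']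
    have key : ∀ k ∈ range (m+1),
        ((k+1+1 : ℕ) : ℝ) * (((k+1+1 : ℕ) : ℝ) - 1) *
            (x^(k+1+1) * y^(m+2-(k+1+1)) * (((m+2).choose (k+1+1)) : ℝ))
        = ((m+2 : ℕ) : ℝ) * (((m+2 : ℕ) : ℝ) - 1) * x^2 *
            (x^k * y^(m-k) * ((m.choose k) : ℝ)) := by
      intro k hk
      have h1 := Nat.add_one_mul_choose_eq (m+1) (k+1)
      have h2 := Nat.add_one_mul_choose_eq m k
      have h1' : ((m+2 : ℕ) : ℝ) * ((m+1).choose (k+1) : ℝ)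
          = ((m+2).choose (k+2) : ℝ) * ((k+2 : ℕ) : ℝ) := by
        exact_mod_cast congrArg (Nat.cast (R := ℝ)) h1
      have h2' : ((m+1 : ℕ) : ℝ) * (m.choose k : ℝ)
          = ((m+1).choose (k+1) : ℝ) * ((k+1 : ℕ) : ℝ) := by
        exact_mod_cast congrArg (Nat.cast (R := ℝ)) h2
      have hsub : m + 2 - (k+1+1) = m - k := by omega
      rw [hsub]
      push_cast at h1' h2' ⊢
      linear_combination (-(x^(k+2)*y^(m-k))*((k:ℝ)+1)) * h1'
        + (-(x^(k+2)*y^(m-k))*((m:ℝ)+2)) * h2'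
    rw [Finset.sum_congr rfl key, ← Finset.mul_sum, aux_sum0]
    push_cast
    ring

private lemma bsum0 (p : ℝ) (M : ℕ) :
    ∑ k ∈ Finset.range (M+1), p^k * (1-p)^(M-k) * (M.choose k : ℝ) = 1 := by
  rw [aux_sum0]; norm_num

private lemma bsum1 (p : ℝ) (M : ℕ) :
    ∑ k ∈ Finset.range (M+1), (k:ℝ) * (p^k * (1-p)^(M-k) * (M.choose k : ℝ))
      = M * p := by
  rw [aux_sum1]; norm_num

private lemma bsum2 (p : ℝ) (M : ℕ) :
    ∑ k ∈ Finset.range (M+1), (k:ℝ) * ((k:ℝ)-1) * (p^k * (1-p)^(M-k) * (M.choose k : ℝ))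
      = M * ((M:ℝ)-1) * p^2 := by
  rw [aux_sum2]; norm_num

private lemma bvar (p : ℝ) (M : ℕ) :
    ∑ k ∈ Finset.range (M+1),
        ((k:ℝ) - M*p)^2 * (p^k * (1-p)^(M-k) * (M.choose k : ℝ))
      = M * p * (1-p) := by
  have e : ∀ k ∈ Finset.range (M+1),
      ((k:ℝ) - M*p)^2 * (p^k * (1-p)^(M-k) * (M.choose k : ℝ))
      = (k:ℝ) * ((k:ℝ)-1) * (p^k * (1-p)^(M-k) * (M.choose k : ℝ))
        + (1 - 2*((M:ℝ)*p)) * ((k:ℝ) * (p^k * (1-p)^(M-k) * (M.choose k : ℝ)))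
        + ((M:ℝ)*p)^2 * (p^k * (1-p)^(M-k) * (M.choose k : ℝ)) := by
    intro k _; ring
  rw [Finset.sum_congr rfl e, Finset.sum_add_distrib, Finset.sum_add_distrib,
    ← Finset.mul_sum, ← Finset.mul_sum, bsum0, bsum1, bsum2]
  ring

private lemma key_bound (p : ℝ) (hp0 : 0 < p) (m x : ℝ) (hm : 1 ≤ m) (hx : 0 ≤ x) :
    |m / (x + m ^ ((5:ℝ)/6)) - 1/p| ≤
      2*((x - m*p)^2 / m ^ ((2:ℝ)/3) + m ^ ((2:ℝ)/3) + m ^ ((5:ℝ)/6)) / (m * p^2)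
        + (m ^ ((1:ℝ)/6) + 1/p) * (4*(x - m*p)^2 / (m*p)^2) := by
  have hm0 : (0:ℝ) < m := lt_of_lt_of_le one_pos hm
  have hε0 : 0 < m ^ ((5:ℝ)/6) := Real.rpow_pos_of_pos hm0 _
  have hd0 : 0 < x + m ^ ((5:ℝ)/6) := by linarith
  have hμ0 : 0 < m * p := mul_pos hm0 hp0
  have h23 : (0:ℝ) < m ^ ((2:ℝ)/3) := Real.rpow_pos_of_pos hm0 _
  have h160 : (0:ℝ) < m ^ ((1:ℝ)/6) := Real.rpow_pos_of_pos hm0 _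
  have hme : m ^ ((1:ℝ)/6) * m ^ ((5:ℝ)/6) = m := by
    rw [← Real.rpow_add hm0]; norm_num
  have habs : |x - m*p| ≤ (x - m*p)^2 / m ^ ((2:ℝ)/3) + m ^ ((2:ℝ)/3) := by
    rcases le_or_gt (|x - m*p|) (m ^ ((2:ℝ)/3)) with h | h
    · have : (0:ℝ) ≤ (x - m*p)^2 / m ^ ((2:ℝ)/3) := by positivity
      linarith
    · have h2 : |x - m*p| ≤ (x - m*p)^2 / m ^ ((2:ℝ)/3) := by
        rw [le_div_iff₀ h23]
        nlinarith [sq_abs (x - m*p), abs_nonneg (x - m*p)]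
      linarith
  rcases le_or_gt (m*p/2) x with hcase | hcase
  · have eq1 : m/(x + m ^ ((5:ℝ)/6)) - 1/p
        = (m*p - x - m ^ ((5:ℝ)/6)) / (p * (x + m ^ ((5:ℝ)/6))) := by
      field_simp; ring
    rw [eq1, abs_div, abs_of_pos (mul_pos hp0 hd0)]
    have hnum : |m*p - x - m ^ ((5:ℝ)/6)|
        ≤ (x - m*p)^2 / m ^ ((2:ℝ)/3) + m ^ ((2:ℝ)/3) + m ^ ((5:ℝ)/6) := by
      have e : m*p - x - m ^ ((5:ℝ)/6) = -((x - m*p) + m ^ ((5:ℝ)/6)) := by ring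
      rw [e, abs_neg]
      calc |(x - m*p) + m ^ ((5:ℝ)/6)| ≤ |x - m*p| + |m ^ ((5:ℝ)/6)| := abs_add_le _ _
        _ = |x - m*p| + m ^ ((5:ℝ)/6) := by rw [abs_of_pos hε0]
        _ ≤ (x - m*p)^2 / m ^ ((2:ℝ)/3) + m ^ ((2:ℝ)/3) + m ^ ((5:ℝ)/6) := by linarith
    have hden : m * p^2 ≤ 2 * (p * (x + m ^ ((5:ℝ)/6))) := by nlinarith
    have step : |m*p - x - m ^ ((5:ℝ)/6)| / (p * (x + m ^ ((5:ℝ)/6)))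
        ≤ 2*((x - m*p)^2 / m ^ ((2:ℝ)/3) + m ^ ((2:ℝ)/3) + m ^ ((5:ℝ)/6)) / (m * p^2) := by
      rw [div_le_div_iff₀ (mul_pos hp0 hd0) (by positivity)]
      have hR0 : (0:ℝ) ≤ (x - m*p)^2 / m ^ ((2:ℝ)/3) + m ^ ((2:ℝ)/3) + m ^ ((5:ℝ)/6) := by
        positivity
      calc |m*p - x - m ^ ((5:ℝ)/6)| * (m * p^2)
          ≤ ((x - m*p)^2 / m ^ ((2:ℝ)/3) + m ^ ((2:ℝ)/3) + m ^ ((5:ℝ)/6))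
              * (2 * (p * (x + m ^ ((5:ℝ)/6)))) :=
            mul_le_mul hnum hden (by positivity) hR0
        _ = 2*((x - m*p)^2 / m ^ ((2:ℝ)/3) + m ^ ((2:ℝ)/3) + m ^ ((5:ℝ)/6))
              * (p * (x + m ^ ((5:ℝ)/6))) := by ring
    have hsec : (0:ℝ) ≤ (m ^ ((1:ℝ)/6) + 1/p) * (4*(x - m*p)^2 / (m*p)^2) := by positivity
    linarith
  · have h1 : |m/(x + m ^ ((5:ℝ)/6)) - 1/p| ≤ m ^ ((1:ℝ)/6) + 1/p := by
      have hfle : m/(x + m ^ ((5:ℝ)/6)) ≤ m ^ ((1:ℝ)/6) := by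
        rw [div_le_iff₀ hd0]
        calc m = m ^ ((1:ℝ)/6) * m ^ ((5:ℝ)/6) := hme.symm
          _ ≤ m ^ ((1:ℝ)/6) * (x + m ^ ((5:ℝ)/6)) :=
              mul_le_mul_of_nonneg_left (by linarith) h160.le
      calc |m/(x + m ^ ((5:ℝ)/6)) - 1/p|
          ≤ |m/(x + m ^ ((5:ℝ)/6))| + |1/p| := by
            rw [sub_eq_add_neg]
            exact (abs_add_le _ _).trans_eq (by rw [abs_neg])
        _ = m/(x + m ^ ((5:ℝ)/6)) + 1/p := by
            rw [abs_of_pos (div_pos hm0 hd0), abs_of_pos (by positivity)]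
        _ ≤ m ^ ((1:ℝ)/6) + 1/p := by linarith
    have h2 : 1 ≤ 4*(x - m*p)^2 / (m*p)^2 := by
      rw [le_div_iff₀ (by positivity)]
      nlinarith
    have hfirst : (0:ℝ) ≤
        2*((x - m*p)^2 / m ^ ((2:ℝ)/3) + m ^ ((2:ℝ)/3) + m ^ ((5:ℝ)/6)) / (m * p^2) := by
      positivity
    calc |m/(x + m ^ ((5:ℝ)/6)) - 1/p| ≤ (m ^ ((1:ℝ)/6) + 1/p) * 1 := by
          rw [mul_one]; exact h1
      _ ≤ (m ^ ((1:ℝ)/6) + 1/p) * (4*(x - m*p)^2 / (m*p)^2) :=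
          mul_le_mul_of_nonneg_left h2 (by positivity)
      _ ≤ _ := by linarith

private lemma final_ineq (p m : ℝ) (hp0 : 0 < p) (hm : 1 ≤ m) :
    (2/(m ^ ((2:ℝ)/3)*(m*p^2)) + (m ^ ((1:ℝ)/6) + 1/p)*(4/(m*p)^2)) * m
        + 2*(m ^ ((2:ℝ)/3) + m ^ ((5:ℝ)/6))/(m*p^2)
      ≤ (10/p^2 + 4/p^3) * m ^ (-(1/6) : ℝ) := by
  have hm0 : (0:ℝ) < m := lt_of_lt_of_le one_pos hm
  set r := m ^ ((1:ℝ)/6) with hrdef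
  have hr1 : 1 ≤ r := by
    have := Real.rpow_le_rpow_of_exponent_le hm (show (0:ℝ) ≤ 1/6 by norm_num)
    rwa [Real.rpow_zero] at this
  have hr0 : (0:ℝ) < r := lt_of_lt_of_le one_pos hr1
  have h23 : m ^ ((2:ℝ)/3) = r^4 := by
    rw [hrdef, ← Real.rpow_natCast (m ^ ((1:ℝ)/6)) 4, ← Real.rpow_mul hm0.le]
    norm_num
  have h56 : m ^ ((5:ℝ)/6) = r^5 := by
    rw [hrdef, ← Real.rpow_natCast (m ^ ((1:ℝ)/6)) 5, ← Real.rpow_mul hm0.le]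
    norm_num
  have hm6 : m = r^6 := by
    rw [hrdef, ← Real.rpow_natCast (m ^ ((1:ℝ)/6)) 6, ← Real.rpow_mul hm0.le]
    norm_num
  have hneg : m ^ (-(1/6) : ℝ) = 1/r := by
    rw [Real.rpow_neg hm0.le, one_div, hrdef]
    norm_num
  rw [h23, h56, hneg]
  rw [hm6]
  have lhs_eq : (2/(r^4*(r^6*p^2)) + (r + 1/p)*(4/(r^6*p)^2)) * r^6
      + 2*(r^4 + r^5)/(r^6*p^2)
      = 2/(r^4*p^2) + 4/(r^5*p^2) + 4/(r^6*p^3) + 2/(r^2*p^2) + 2/(r*p^2) := by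
    field_simp
    ring
  have rhs_eq : (10/p^2 + 4/p^3) * (1/r)
      = 2/(r*p^2) + 4/(r*p^2) + 4/(r*p^3) + 2/(r*p^2) + 2/(r*p^2) := by
    field_simp
    ring
  rw [lhs_eq, rhs_eq]
  have hmono : ∀ i : ℕ, 1 ≤ i → r ≤ r^i := by
    intro i hi
    calc r = r^1 := (pow_one r).symm
      _ ≤ r^i := pow_le_pow_right₀ hr1 hi
  have tgen : ∀ (c : ℝ) (i j : ℕ), 0 ≤ c → 1 ≤ i → c/(r^i*p^j) ≤ c/(r*p^j) := by
    intro c i j hc hi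
    rw [div_le_div_iff₀ (by positivity) (by positivity)]
    have := mul_le_mul_of_nonneg_right (hmono i hi) (le_of_lt (pow_pos hp0 j))
    nlinarith [hc]
  have t1 := tgen 2 4 2 (by norm_num) (by norm_num)
  have t2 := tgen 4 5 2 (by norm_num) (by norm_num)
  have t3 := tgen 4 6 3 (by norm_num) (by norm_num)
  have t4 := tgen 2 2 2 (by norm_num) (by norm_num)
  linarith


private lemma abstract_bound (p : ℝ) (hp0 : 0 < p) (hp1 : p ≤ 1) (M : ℕ) (hM : 1 ≤ M)
    (b : ℕ → ℝ) (hbnn : ∀ k ∈ Finset.range (M+1), 0 ≤ b k)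
    (h0 : ∑ k ∈ Finset.range (M+1), b k = 1)
    (hV : ∑ k ∈ Finset.range (M+1), ((k:ℝ) - M*p)^2 * b k = M*p*(1-p)) :
    |(∑ k ∈ Finset.range (M+1), b k * ((M:ℝ)/((k:ℝ) + (M:ℝ) ^ ((5:ℝ)/6)))) - 1/p|
      ≤ (10/p^2 + 4/p^3) * (M:ℝ) ^ (-(1/6) : ℝ) := by
  have hm1 : (1:ℝ) ≤ (M:ℝ) := by exact_mod_cast hM
  have hm0 : (0:ℝ) < (M:ℝ) := lt_of_lt_of_le one_pos hm1
  have step1 : (∑ k ∈ Finset.range (M+1), b k * ((M:ℝ)/((k:ℝ) + (M:ℝ) ^ ((5:ℝ)/6)))) - 1/p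
      = ∑ k ∈ Finset.range (M+1), b k * ((M:ℝ)/((k:ℝ) + (M:ℝ) ^ ((5:ℝ)/6)) - 1/p) := by
    rw [Finset.sum_congr rfl (fun k _ => mul_sub (b k) ((M:ℝ)/((k:ℝ) + (M:ℝ) ^ ((5:ℝ)/6))) (1/p)),
      Finset.sum_sub_distrib, ← Finset.sum_mul, h0, one_mul]
  rw [step1]
  calc |∑ k ∈ Finset.range (M+1), b k * ((M:ℝ)/((k:ℝ) + (M:ℝ) ^ ((5:ℝ)/6)) - 1/p)|
      ≤ ∑ k ∈ Finset.range (M+1), |b k * ((M:ℝ)/((k:ℝ) + (M:ℝ) ^ ((5:ℝ)/6)) - 1/p)| := by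
        exact Finset.abs_sum_le_sum_abs _ _
    _ = ∑ k ∈ Finset.range (M+1), b k * |(M:ℝ)/((k:ℝ) + (M:ℝ) ^ ((5:ℝ)/6)) - 1/p| := by
        refine Finset.sum_congr rfl fun k hk => ?_
        rw [abs_mul, abs_of_nonneg (hbnn k hk)]
    _ ≤ ∑ k ∈ Finset.range (M+1), b k *
          (2*(((k:ℝ) - (M:ℝ)*p)^2 / (M:ℝ) ^ ((2:ℝ)/3) + (M:ℝ) ^ ((2:ℝ)/3) + (M:ℝ) ^ ((5:ℝ)/6)) / ((M:ℝ) * p^2)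
            + ((M:ℝ) ^ ((1:ℝ)/6) + 1/p) * (4*((k:ℝ) - (M:ℝ)*p)^2 / ((M:ℝ)*p)^2)) := by
        refine Finset.sum_le_sum fun k hk => ?_
        exact mul_le_mul_of_nonneg_left
          (key_bound p hp0 (M:ℝ) (k:ℝ) hm1 (Nat.cast_nonneg k)) (hbnn k hk)
    _ = (2/((M:ℝ) ^ ((2:ℝ)/3)*((M:ℝ)*p^2)) + ((M:ℝ) ^ ((1:ℝ)/6) + 1/p)*(4/((M:ℝ)*p)^2)) * ((M:ℝ)*p*(1-p))
          + 2*((M:ℝ) ^ ((2:ℝ)/3) + (M:ℝ) ^ ((5:ℝ)/6))/((M:ℝ)*p^2) := by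
        have e : ∀ k ∈ Finset.range (M+1), b k *
            (2*(((k:ℝ) - (M:ℝ)*p)^2 / (M:ℝ) ^ ((2:ℝ)/3) + (M:ℝ) ^ ((2:ℝ)/3) + (M:ℝ) ^ ((5:ℝ)/6)) / ((M:ℝ) * p^2)
              + ((M:ℝ) ^ ((1:ℝ)/6) + 1/p) * (4*((k:ℝ) - (M:ℝ)*p)^2 / ((M:ℝ)*p)^2))
            = (2/((M:ℝ) ^ ((2:ℝ)/3)*((M:ℝ)*p^2)) + ((M:ℝ) ^ ((1:ℝ)/6) + 1/p)*(4/((M:ℝ)*p)^2))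
                * (((k:ℝ) - (M:ℝ)*p)^2 * b k)
              + (2*((M:ℝ) ^ ((2:ℝ)/3) + (M:ℝ) ^ ((5:ℝ)/6))/((M:ℝ)*p^2)) * b k := by
          intro k _; ring
        rw [Finset.sum_congr rfl e, Finset.sum_add_distrib, ← Finset.mul_sum, ← Finset.mul_sum,
          hV, h0, mul_one]
    _ ≤ (2/((M:ℝ) ^ ((2:ℝ)/3)*((M:ℝ)*p^2)) + ((M:ℝ) ^ ((1:ℝ)/6) + 1/p)*(4/((M:ℝ)*p)^2)) * (M:ℝ)
          + 2*((M:ℝ) ^ ((2:ℝ)/3) + (M:ℝ) ^ ((5:ℝ)/6))/((M:ℝ)*p^2) := by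
        have hc1 : (0:ℝ) ≤ 2/((M:ℝ) ^ ((2:ℝ)/3)*((M:ℝ)*p^2)) + ((M:ℝ) ^ ((1:ℝ)/6) + 1/p)*(4/((M:ℝ)*p)^2) := by
          have h1 : (0:ℝ) < (M:ℝ) ^ ((2:ℝ)/3) := Real.rpow_pos_of_pos hm0 _
          have h2 : (0:ℝ) < (M:ℝ) ^ ((1:ℝ)/6) := Real.rpow_pos_of_pos hm0 _
          positivity
        have hVle : (M:ℝ)*p*(1-p) ≤ (M:ℝ) := by nlinarith
        linarith [mul_le_mul_of_nonneg_left hVle hc1]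
    _ ≤ (10/p^2 + 4/p^3) * (M:ℝ) ^ (-(1/6) : ℝ) := final_ineq p (M:ℝ) hp0 hm1

/-- For `m̃` binomial with `M` trials and success probability `p ∈ (0,1]`, and
`ε_M = M^{5/6}`, we have `lim_{M→∞} E[M/(m̃ + ε_M)] = 1/p`. -/
theorem binomial_regularized_inverse_moment_limit (p : ℝ) (hp0 : 0 < p) (hp1 : p ≤ 1) :
    Tendsto
      (fun M : ℕ =>
        ∑ k : Fin (M + 1),
          ((PMF.binomial (Real.toNNReal p) (by simpa using hp1) M) k).toReal *
            ((M : ℝ) / ((k : ℕ) + (M : ℝ) ^ ((5:ℝ) / 6))))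
      atTop (𝓝 (1 / p)) := by
  have hq : (0:ℝ) ≤ 1 - p := by linarith
  have hg : ∀ M : ℕ,
      (∑ k : Fin (M + 1),
        ((PMF.binomial (Real.toNNReal p) (by simpa using hp1) M) k).toReal *
          ((M : ℝ) / ((k : ℕ) + (M : ℝ) ^ ((5:ℝ) / 6))))
      = ∑ k ∈ Finset.range (M+1),
          p^k * (1-p)^(M-k) * (M.choose k : ℝ) * ((M:ℝ) / ((k:ℝ) + (M:ℝ) ^ ((5:ℝ)/6))) := by
    intro M
    rw [← Fin.sum_univ_eq_sum_range
      (fun k => p^k * (1-p)^(M-k) * (M.choose k : ℝ) * ((M:ℝ) / ((k:ℝ) + (M:ℝ) ^ ((5:ℝ)/6)))) (M+1)]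
    refine Finset.sum_congr rfl fun k _ => ?_
    congr 1
    rw [PMF.binomial_apply]
    rw [Fin.val_last]
    have h1 : ((1 - Real.toNNReal p : NNReal) : ℝ) = 1 - p := by
      rw [NNReal.coe_sub (by simpa using hp1), Real.coe_toNNReal _ hp0.le, NNReal.coe_one]
    have h1e : (1 - ((Real.toNNReal p : NNReal) : ℝ≥0∞)).toReal = 1 - p := by
      rw [← ENNReal.coe_one, ← ENNReal.coe_sub, ENNReal.coe_toReal, h1]
    simp [ENNReal.toReal_mul, ENNReal.toReal_pow, h1, h1e, Real.coe_toNNReal _ hp0.le]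
  rw [funext hg]
  have key : Tendsto (fun M : ℕ =>
      (∑ k ∈ Finset.range (M+1),
        p^k * (1-p)^(M-k) * (M.choose k : ℝ) * ((M:ℝ) / ((k:ℝ) + (M:ℝ) ^ ((5:ℝ)/6)))) - 1/p)
      atTop (𝓝 0) := by
    refine squeeze_zero_norm'
      (a := fun M : ℕ => (10/p^2 + 4/p^3) * (M:ℝ) ^ (-(1/6) : ℝ)) ?_ ?_
    · filter_upwards [eventually_ge_atTop 1] with M hM
      rw [Real.norm_eq_abs]
      refine abstract_bound p hp0 hp1 M hM
        (fun k => p^k * (1-p)^(M-k) * (M.choose k : ℝ)) ?_ (bsum0 p M) (bvar p M)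
      intro k _
      exact mul_nonneg (mul_nonneg (pow_nonneg hp0.le _) (pow_nonneg hq _)) (Nat.cast_nonneg _)
    · have h0 : Tendsto (fun x : ℝ => x ^ (-(1/6) : ℝ)) atTop (𝓝 0) :=
        tendsto_rpow_neg_atTop (by norm_num)
      have h1 := (h0.comp tendsto_natCast_atTop_atTop).const_mul ((10:ℝ)/p^2 + 4/p^3)
      simpa using h1
  have h2 := key.add_const (1/p)
  simpa using h2
end

section
/- Let {Q_k}_{k=1}^M be Pauli measurements, and for each Pauli string P_j in O = ∑_j a_j P_j let m_{jℓ} = #{k : P_j ⊳ Q_k and P_ℓ ⊳ Q_k}, with m_j = m_{jj} > 0. Define the estimator ⟨O⟩~ = ∑_j a_j (1/m_j) ∑_{k: P_j⊳Q_k} μ(P_j, x̃_k), where the outcomes x̃_k of independent measurements satisfy E[μ(P_j,x̃_k)] = ⟨P_j⟩ and E[μ(P_j,x̃_k)μ(P_ℓ,x̃_k)] = ⟨P_jP_ℓ⟩ whenever Q_k covers both P_j and P_ℓ. Then Var(⟨O⟩~) = ∑_{j,ℓ} a_j a_ℓ (m_{jℓ}/(m_{jj} m_{ℓℓ})) (⟨P_jP_ℓ⟩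 − ⟨P_j⟩⟨P_ℓ⟩). -/
open MeasureTheory ProbabilityTheory

/-- Variance of the term-by-term observable estimator.  Here `cover j k` encodes the
qubit-wise covering relation `P_j ⊳ Q_k`, `Y j k ω = μ(P_j, x̃_k)` is the one-shot
estimate of `⟨P_j⟩` from the `k`-th measurement outcome, measurements with different `k`
are independent, `e j = ⟨P_j⟩` and `c j ℓ = ⟨P_j P_ℓ⟩` are the true moments, and
`m j ℓ = #{k : P_j ⊳ Q_k ∧ P_ℓ ⊳ Q_k}`. -/
theorem variance_of_term_estimator
    {Ω : Type*} [MeasurableSpace Ω] (μ : Measure Ω) [IsProbabilityMeasure μ]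
    (J M : ℕ) (cover : Fin J → Fin M → Prop) [∀ j k, Decidable (cover j k)]
    (a : Fin J → ℝ) (Y : Fin J → Fin M → Ω → ℝ)
    (hYmeas : ∀ j k, Measurable (Y j k))
    (hYbound : ∀ j k ω, |Y j k ω| ≤ 1)
    (hindep : iIndepFun (m := fun _ : Fin M => (inferInstance : MeasurableSpace (Fin J → ℝ)))
      (fun k ω j => Y j k ω) μ)
    (e : Fin J → ℝ) (he : ∀ j k, cover j k → ∫ ω, Y j k ω ∂μ = e j)
    (c : Fin J → Fin J → ℝ)
    (hc : ∀ j l k, cover j k → cover l k → ∫ ω, Y j k ω * Y l k ω ∂μ = c j l)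
    (m : Fin J → Fin J → ℕ)
    (hm : ∀ j l, m j l = (Finset.univ.filter (fun k => cover j k ∧ cover l k)).card)
    (hmpos : ∀ j, 0 < m j j) :
    variance
      (fun ω => ∑ j, a j * ((1 / (m j j : ℝ)) *
        ∑ k ∈ Finset.univ.filter (fun k => cover j k), Y j k ω)) μ =
    ∑ j, ∑ l, a j * a l * ((m j l : ℝ) / ((m j j : ℝ) * (m l l : ℝ))) *
      (c j l - e j * e l) := by
  classical
  set coef : Fin J → Fin M → ℝ :=
    fun j k => if cover j k then a j / (m j j : ℝ) else 0 with hcoef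
  set Z : Fin M → Ω → ℝ := fun k ω => ∑ j, coef j k * Y j k ω with hZ
  -- integrability facts
  have hYmem : ∀ j k, MemLp (Y j k) 2 μ := fun j k =>
    (memLp_top_of_bound (hYmeas j k).aestronglyMeasurable 1
      (Filter.Eventually.of_forall (hYbound j k))).mono_exponent le_top
  have hYint : ∀ j k, Integrable (Y j k) μ := fun j k =>
    (hYmem j k).integrable (by norm_num)
  have hYYint : ∀ j l k, Integrable (fun ω => Y j k ω * Y l k ω) μ := by
    intro j l k
    refine ((memLp_top_of_bound ((hYmeas j k).mul (hYmeas l k)).aestronglyMeasurable 1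
      (Filter.Eventually.of_forall fun ω => ?_)).mono_exponent le_top).integrable le_rfl
    calc |Y j k ω * Y l k ω| = |Y j k ω| * |Y l k ω| := abs_mul _ _
      _ ≤ 1 * 1 := mul_le_mul (hYbound j k ω) (hYbound l k ω) (abs_nonneg _) zero_le_one
      _ = 1 := one_mul 1
  have hZmem : ∀ k, MemLp (Z k) 2 μ := by
    intro k
    exact memLp_finsetSum _ fun j _ => (hYmem j k).const_mul _
  -- independence of the Z k
  have hZindep : ∀ ⦃k k' : Fin M⦄, k ≠ k' → IndepFun (Z k) (Z k') μ := by
    intro k k' hkk'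
    have hg : ∀ k : Fin M, Measurable (fun v : Fin J → ℝ => ∑ j, coef j k * v j) := by
      intro k
      exact Finset.measurable_sum _ fun j _ => (measurable_pi_apply j).const_mul _
    exact (hindep.comp (fun k (v : Fin J → ℝ) => ∑ j, coef j k * v j) hg).indepFun hkk'
  -- rewrite the estimator as a sum of independent variables
  have hEq : (fun ω => ∑ j, a j * ((1 / (m j j : ℝ)) *
      ∑ k ∈ Finset.univ.filter (fun k => cover j k), Y j k ω)) = ∑ k, Z k := by
    funext ω
    have : ∀ j : Fin J, a j * ((1 / (m j j : ℝ)) *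
        ∑ k ∈ Finset.univ.filter (fun k => cover j k), Y j k ω)
        = ∑ k, coef j k * Y j k ω := by
      intro j
      rw [Finset.sum_filter, Finset.mul_sum, Finset.mul_sum]
      refine Finset.sum_congr rfl fun k _ => ?_
      by_cases h : cover j k <;> simp [hcoef, h] <;> ring
    calc (∑ j, a j * ((1 / (m j j : ℝ)) *
          ∑ k ∈ Finset.univ.filter (fun k => cover j k), Y j k ω))
        = ∑ j, ∑ k, coef j k * Y j k ω := Finset.sum_congr rfl fun j _ => this j
      _ = ∑ k, ∑ j, coef j k * Y j k ω := Finset.sum_comm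
      _ = (∑ k, Z k) ω := by simp [hZ]
  rw [hEq]
  rw [IndepFun.variance_sum (fun k _ => hZmem k)
    (fun k _ k' _ hkk' => hZindep hkk')]
  -- compute the variance of each Z k
  have hvarZ : ∀ k, variance (Z k) μ = ∑ j, ∑ l,
      (if cover j k ∧ cover l k then
        (a j / (m j j : ℝ)) * (a l / (m l l : ℝ)) * (c j l - e j * e l) else 0) := by
    intro k
    have h2 : ∫ ω, Z k ω ∂μ = ∑ j, (if cover j k then (a j / (m j j : ℝ)) * e j else 0) := by
      rw [integral_finset_sum _ fun j _ => (hYint j k).const_mul _]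
      refine Finset.sum_congr rfl fun j _ => ?_
      rw [integral_const_mul]
      by_cases h : cover j k
      · simp [hcoef, h, he j k h]
      · simp [hcoef, h]
    have h1 : ∫ ω, Z k ω ^ 2 ∂μ = ∑ j, ∑ l,
        (if cover j k ∧ cover l k then
          (a j / (m j j : ℝ)) * (a l / (m l l : ℝ)) * c j l else 0) := by
      have hsq : ∀ ω, Z k ω ^ 2 = ∑ j, ∑ l,
          (coef j k * coef l k) * (Y j k ω * Y l k ω) := by
        intro ω
        rw [sq, hZ]
        rw [Finset.sum_mul_sum]
        exact Finset.sum_congr rfl fun j _ => Finset.sum_congr rfl fun l _ => by ring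
      simp only [hsq]
      rw [integral_finset_sum _ fun j _ => integrable_finset_sum _
        fun l _ => (hYYint j l k).const_mul _]
      refine Finset.sum_congr rfl fun j _ => ?_
      rw [integral_finset_sum _ fun l _ => (hYYint j l k).const_mul _]
      refine Finset.sum_congr rfl fun l _ => ?_
      rw [integral_const_mul]
      by_cases hj : cover j k
      · by_cases hl : cover l k
        · simp [hcoef, hj, hl, hc j l k hj hl]
        · simp [hcoef, hj, hl]
      · simp [hcoef, hj]
    have hdef := variance_eq_sub (hZmem k)
    have h2' : (∫ ω, Z k ω ∂μ) ^ 2 = ∑ j, ∑ l,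
        (if cover j k ∧ cover l k then
          (a j / (m j j : ℝ)) * (a l / (m l l : ℝ)) * (e j * e l) else 0) := by
      rw [h2, sq, Finset.sum_mul_sum]
      refine Finset.sum_congr rfl fun j _ => Finset.sum_congr rfl fun l _ => ?_
      by_cases hj : cover j k
      · by_cases hl : cover l k
        · simp [hj, hl]; ring
        · simp [hj, hl]
      · simp [hj]
    calc variance (Z k) μ = (∫ ω, Z k ω ^ 2 ∂μ) - (∫ ω, Z k ω ∂μ) ^ 2 := by
          simpa using hdef
      _ = _ := by
          rw [h1, h2', ← Finset.sum_sub_distrib]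
          refine Finset.sum_congr rfl fun j _ => ?_
          rw [← Finset.sum_sub_distrib]
          refine Finset.sum_congr rfl fun l _ => ?_
          by_cases h : cover j k ∧ cover l k <;> simp [h] <;> ring
  simp only [hvarZ]
  rw [Finset.sum_comm]
  refine Finset.sum_congr rfl fun j _ => ?_
  rw [Finset.sum_comm]
  refine Finset.sum_congr rfl fun l _ => ?_
  have hcard : (∑ k, (if cover j k ∧ cover l k then
      (a j / (m j j : ℝ)) * (a l / (m l l : ℝ)) * (c j l - e j * e l) else 0))
      = ((m j l : ℝ)) * ((a j / (m j j : ℝ)) * (a l / (m l l : ℝ)) * (c j l - e j * e l)) := by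
    rw [← Finset.sum_filter, Finset.sum_const, nsmul_eq_mul, hm j l]
  rw [hcard]
  ring
end
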